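/- arXiv:1711.05359 — 3 statements merged into one kernel-verified Lean document; each statement's English description precedes it below -/
import Mathlib

section
/- Fix an integer n ≥ 3, t* = tan(π/(2n)), and let ρ(t) = 2t*/(t² − t*²) = 1/(t − t*) − 1/(t + t*). For 1 ≤ k ≤ n−1 let F_k^{-1}(t) = t*²(b_k t − a_k)/(−a_k t − b_k) with a_k = cos(πk/n), b_k = sin(πk/n). Then for every t ∈ (−t*, t*), ρ(t) = ∑_{k=1}^{n−1} ρ(F_k^{-1}(t)) · |(F_k^{-1})'(t)|, i.e., ρ is the density of an (infinite) absolutely continuous invariant measure for the finite Gauss transformation. -/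
open Real


lemma aux_pos (θ β t : ℝ) (hθ : 0 < θ) (hθ2 : θ < π/2)
    (hβ1 : θ ≤ β) (hβ2 : β ≤ π - θ)
    (ht1 : -tan θ < t) (ht2 : t < tan θ) : 0 < cos β * t + sin β := by
  have hπ : 0 < π := pi_pos
  have hsβ : 0 < sin β := sin_pos_of_pos_of_lt_pi (by linarith) (by linarith)
  have hcθ : 0 < cos θ := cos_pos_of_mem_Ioo ⟨by linarith, hθ2⟩
  rw [tan_eq_sin_div_cos] at ht1 ht2
  have ht1' : -sin θ < t * cos θ := by
    rw [← neg_div] at ht1; exact (div_lt_iff₀ hcθ).mp ht1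
  have ht2' : t * cos θ < sin θ := (lt_div_iff₀ hcθ).mp ht2
  have key : 0 < (cos β * t + sin β) * cos θ := by
    rcases lt_trichotomy (cos β) 0 with h | h | h
    · have h1 : 0 ≤ sin (β + θ) := sin_nonneg_of_nonneg_of_le_pi (by linarith) (by linarith)
      rw [sin_add] at h1
      nlinarith [mul_lt_mul_of_neg_left ht2' h]
    · nlinarith
    · have h1 : 0 ≤ sin (β - θ) := sin_nonneg_of_nonneg_of_le_pi (by linarith) (by linarith)
      rw [sin_sub] at h1
      nlinarith [mul_lt_mul_of_pos_left ht1' h]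
  nlinarith

lemma per_term (θ α t : ℝ) (hθ : 0 < θ) (hθ2 : θ < π/2)
    (hα1 : 2*θ ≤ α) (hα2 : α ≤ π - 2*θ)
    (ht1 : -tan θ < t) (ht2 : t < tan θ) :
    2 * tan θ / ((tan θ ^ 2 * (sin α * t - cos α) / (-(cos α) * t - sin α)) ^ 2 - tan θ ^ 2) *
      |deriv (fun s : ℝ => tan θ ^ 2 * (sin α * s - cos α) / (-(cos α) * s - sin α)) t|
    = cos (α + θ) / (cos (α + θ) * t + sin (α + θ))
      - cos (α - θ) / (cos (α - θ) * t + sin (α - θ)) := by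
  have hπ := pi_pos
  have hcθ : 0 < cos θ := cos_pos_of_mem_Ioo ⟨by linarith, hθ2⟩
  have hsθ : 0 < sin θ := sin_pos_of_pos_of_lt_pi hθ (by linarith)
  have hT : 0 < tan θ := tan_pos_of_pos_of_lt_pi_div_two hθ hθ2
  have htan : tan θ = sin θ / cos θ := tan_eq_sin_div_cos θ
  have hD : 0 < cos α * t + sin α :=
    aux_pos θ α t hθ hθ2 (by linarith) (by linarith) ht1 ht2
  have hg1 : 0 < cos (α - θ) * t + sin (α - θ) :=
    aux_pos θ (α - θ) t hθ hθ2 (by linarith) (by linarith) ht1 ht2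
  have hg2 : 0 < cos (α + θ) * t + sin (α + θ) :=
    aux_pos θ (α + θ) t hθ hθ2 (by linarith) (by linarith) ht1 ht2
  set A := cos α with hA
  set B := sin α with hB
  have hAB : A ^ 2 + B ^ 2 = 1 := cos_sq_add_sin_sq α
  have hDne : -A * t - B ≠ 0 := by intro h; nlinarith
  -- derivative
  have h1 : HasDerivAt (fun s : ℝ => tan θ ^ 2 * (B * s - A)) (tan θ ^ 2 * B) t := by
    simpa using (((hasDerivAt_id t).const_mul B).sub_const A).const_mul (tan θ ^ 2)
  have h2 : HasDerivAt (fun s : ℝ => -A * s - B) (-A) t := by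
    simpa using ((hasDerivAt_id t).const_mul (-A)).sub_const B
  have hdiv : HasDerivAt (fun s : ℝ => tan θ ^ 2 * (B * s - A) / (-A * s - B))
      ((tan θ ^ 2 * B * (-A * t - B) - tan θ ^ 2 * (B * t - A) * (-A)) / (-A * t - B) ^ 2) t :=
    h1.div h2 hDne
  have hder : deriv (fun s : ℝ => tan θ ^ 2 * (B * s - A) / (-A * s - B)) t
      = -(tan θ ^ 2) / (A * t + B) ^ 2 := by
    rw [hdiv.deriv, div_eq_div_iff (by positivity) (by positivity)]
    linear_combination (-(tan θ ^ 2) * (A * t + B) ^ 2) * hAB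
  rw [hder]
  have habs : |(-(tan θ ^ 2)) / (A * t + B) ^ 2| = tan θ ^ 2 / (A * t + B) ^ 2 := by
    rw [abs_div, abs_neg, abs_of_nonneg (by positivity), abs_of_nonneg (by positivity)]
  rw [habs]
  -- algebra
  have hc1 : cos (α - θ) = A * cos θ + B * sin θ := by rw [cos_sub]
  have hs1 : sin (α - θ) = B * cos θ - A * sin θ := by rw [sin_sub]
  have hc2 : cos (α + θ) = A * cos θ - B * sin θ := by rw [cos_add]
  have hs2 : sin (α + θ) = B * cos θ + A * sin θ := by rw [sin_add]
  rw [hc1, hs1] at hg1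
  rw [hc2, hs2] at hg2
  rw [hc1, hs1, hc2, hs2]
  set g1 : ℝ := (A * cos θ + B * sin θ) * t + (B * cos θ - A * sin θ) with hg1def
  set g2 : ℝ := (A * cos θ - B * sin θ) * t + (B * cos θ + A * sin θ) with hg2def
  have e1 : tan θ ^ 2 * (B * t - A) / (-A * t - B) - tan θ
      = tan θ * g1 / (cos θ * (-A * t - B)) := by
    have h0 : tan θ ^ 2 * (B * t - A) / (-A * t - B) - tan θ
        = (tan θ ^ 2 * (B * t - A) - tan θ * (-A * t - B)) / (-A * t - B) := by
      rw [sub_div, mul_div_assoc, mul_div_cancel_right₀ _ hDne]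
    rw [h0, div_eq_div_iff hDne (mul_ne_zero hcθ.ne' hDne), hg1def, htan]
    field_simp
    ring
  have e2 : tan θ ^ 2 * (B * t - A) / (-A * t - B) + tan θ
      = -(tan θ * g2) / (cos θ * (-A * t - B)) := by
    have h0 : tan θ ^ 2 * (B * t - A) / (-A * t - B) + tan θ
        = (tan θ ^ 2 * (B * t - A) + tan θ * (-A * t - B)) / (-A * t - B) := by
      rw [add_div, mul_div_assoc, mul_div_cancel_right₀ _ hDne]
    rw [h0, div_eq_div_iff hDne (mul_ne_zero hcθ.ne' hDne), hg2def, htan]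
    field_simp
    ring
  have hu : (tan θ ^ 2 * (B * t - A) / (-A * t - B)) ^ 2 - tan θ ^ 2
      = -(tan θ ^ 2 * g1 * g2) / (cos θ ^ 2 * (A * t + B) ^ 2) := by
    have hfac : (tan θ ^ 2 * (B * t - A) / (-A * t - B)) ^ 2 - tan θ ^ 2
        = (tan θ ^ 2 * (B * t - A) / (-A * t - B) - tan θ)
          * (tan θ ^ 2 * (B * t - A) / (-A * t - B) + tan θ) := by ring
    rw [hfac, e1, e2, div_mul_div_comm,
      div_eq_div_iff (mul_ne_zero (mul_ne_zero hcθ.ne' hDne) (mul_ne_zero hcθ.ne' hDne))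
        (by positivity)]
    ring
  have hL : 2 * tan θ / (-(tan θ ^ 2 * g1 * g2) / (cos θ ^ 2 * (A * t + B) ^ 2))
        * (tan θ ^ 2 / (A * t + B) ^ 2)
      = -(2 * sin θ * cos θ) / (g1 * g2) := by
    rw [htan]
    field_simp [hg1.ne', hg2.ne', hD.ne', hcθ.ne', hsθ.ne']
  rw [hu, hL]
  rw [div_sub_div _ _ hg2.ne' hg1.ne']
  rw [div_eq_div_iff (mul_pos hg1 hg2).ne' (mul_pos hg2 hg1).ne']
  rw [hg1def, hg2def]
  linear_combination ((2 * sin θ * cos θ) * (((A * cos θ + B * sin θ) * t + (B * cos θ - A * sin θ)) * ((A * cos θ - B * sin θ) * t + (B * cos θ + A * sin θ)))) * hAB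

theorem invariant_density_transfer (n : ℕ) (hn : 3 ≤ n) (t : ℝ)
    (ht : t ∈ Set.Ioo (-(tan (π / (2 * n)))) (tan (π / (2 * n)))) :
    2 * tan (π / (2 * n)) / (t ^ 2 - tan (π / (2 * n)) ^ 2) =
      ∑ k ∈ Finset.Icc 1 (n - 1),
        (2 * tan (π / (2 * n)) /
          ((tan (π / (2 * n)) ^ 2 * (sin (π * k / n) * t - cos (π * k / n)) /
            (-(cos (π * k / n)) * t - sin (π * k / n))) ^ 2 - tan (π / (2 * n)) ^ 2)) *
        |deriv (fun s : ℝ => tan (π / (2 * n)) ^ 2 * (sin (π * k / n) * s - cos (π * k / n)) /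
            (-(cos (π * k / n)) * s - sin (π * k / n))) t| := by
  have hπ := pi_pos
  have hn3 : (3:ℝ) ≤ (n:ℝ) := by exact_mod_cast hn
  have hnn : (0:ℝ) < (n:ℝ) := by linarith
  set θ : ℝ := π / (2 * (n:ℝ)) with hθdef
  obtain ⟨ht1, ht2⟩ := ht
  have hθpos : 0 < θ := by rw [hθdef]; positivity
  have hθ2 : θ < π / 2 := by
    rw [hθdef, div_lt_div_iff₀ (by linarith) (by norm_num)]
    nlinarith
  have hπθ : π = 2 * (n:ℝ) * θ := by rw [hθdef]; field_simp
  have hT : 0 < tan θ := tan_pos_of_pos_of_lt_pi_div_two hθpos hθ2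
  have hcθ : 0 < cos θ := cos_pos_of_mem_Ioo ⟨by linarith, hθ2⟩
  have hsθ : 0 < sin θ := sin_pos_of_pos_of_lt_pi hθpos (by linarith)
  have hIcc : Finset.Icc 1 (n - 1) = Finset.Ico 1 n := by
    rw [← Finset.Ico_add_one_right_eq_Icc]
    congr 1
    omega
  rw [hIcc, Finset.sum_Ico_eq_sum_range]
  have key : ∀ i ∈ Finset.range (n - 1),
      (2 * tan θ /
        ((tan θ ^ 2 * (sin (π * ((1 + i : ℕ):ℝ) / n) * t - cos (π * ((1 + i : ℕ):ℝ) / n)) /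
          (-(cos (π * ((1 + i : ℕ):ℝ) / n)) * t - sin (π * ((1 + i : ℕ):ℝ) / n))) ^ 2 - tan θ ^ 2)) *
      |deriv (fun s : ℝ => tan θ ^ 2 * (sin (π * ((1 + i : ℕ):ℝ) / n) * s - cos (π * ((1 + i : ℕ):ℝ) / n)) /
          (-(cos (π * ((1 + i : ℕ):ℝ) / n)) * s - sin (π * ((1 + i : ℕ):ℝ) / n))) t|
      = (fun j : ℕ => cos ((2*(j:ℝ)+1)*θ) / (cos ((2*(j:ℝ)+1)*θ) * t + sin ((2*(j:ℝ)+1)*θ))) (i + 1)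
        - (fun j : ℕ => cos ((2*(j:ℝ)+1)*θ) / (cos ((2*(j:ℝ)+1)*θ) * t + sin ((2*(j:ℝ)+1)*θ))) i := by
    intro i hi
    have hi' : i + 2 ≤ n := by
      have := Finset.mem_range.mp hi; omega
    have hi2 : (i:ℝ) + 2 ≤ (n:ℝ) := by exact_mod_cast hi'
    have hi0 : (0:ℝ) ≤ (i:ℝ) := Nat.cast_nonneg i
    have hα : π * ((1 + i : ℕ):ℝ) / n = (2*(i:ℝ)+2) * θ := by
      rw [hθdef]; push_cast; field_simp; ring
    rw [hα]
    rw [per_term θ ((2*(i:ℝ)+2)*θ) t hθpos hθ2 (by nlinarith) (by nlinarith) ht1 ht2]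
    beta_reduce
    rw [show (2*(i:ℝ)+2)*θ + θ = (2*((i+1:ℕ):ℝ)+1)*θ by push_cast; ring,
      show (2*(i:ℝ)+2)*θ - θ = (2*(i:ℝ)+1)*θ by ring]
  rw [Finset.sum_congr rfl key,
    Finset.sum_range_sub (fun j : ℕ => cos ((2*(j:ℝ)+1)*θ) / (cos ((2*(j:ℝ)+1)*θ) * t + sin ((2*(j:ℝ)+1)*θ))) (n-1)]
  beta_reduce
  rw [show (2*((n-1:ℕ):ℝ)+1)*θ = π - θ by
      rw [Nat.cast_sub (by omega), hπθ]; push_cast; ring,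
    show (2*((0:ℕ):ℝ)+1)*θ = θ by push_cast; ring]
  rw [cos_pi_sub, sin_pi_sub]
  have hd1 : 0 < -cos θ * t + sin θ := by
    rw [tan_eq_sin_div_cos, lt_div_iff₀ hcθ] at ht2
    nlinarith
  have hd2 : 0 < cos θ * t + sin θ := by
    rw [tan_eq_sin_div_cos] at ht1
    have : -sin θ < t * cos θ := by
      rw [← neg_div] at ht1; exact (div_lt_iff₀ hcθ).mp ht1
    nlinarith
  have hTne : t ^ 2 - tan θ ^ 2 ≠ 0 := by nlinarith
  rw [div_sub_div _ _ hd1.ne' hd2.ne', div_eq_div_iff hTne (mul_pos hd1 hd2).ne',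
    tan_eq_sin_div_cos]
  field_simp
  ring
end

section
/- The map T(t) = (3t−1)/(t−1) on [0, 1/3], T(t) = 1/t − 2 on [1/3, 1/2], T(t) = (t−1)/(1−3t) on [1/2, 1] maps [0,1] into [0,1], and the density ρ(t) = 1/(t(1−t)) satisfies the transfer operator equation ρ(t) = ∑_{branches b} ρ(b^{-1}(t))·|(b^{-1})'(t)| for all t ∈ (0,1). -/
open Real

theorem romik_map_invariant_density :
    (∀ t ∈ Set.Icc (0 : ℝ) (1 / 3), (3 * t - 1) / (t - 1) ∈ Set.Icc (0 : ℝ) 1) ∧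
    (∀ t ∈ Set.Icc (1 / 3 : ℝ) (1 / 2), 1 / t - 2 ∈ Set.Icc (0 : ℝ) 1) ∧
    (∀ t ∈ Set.Icc (1 / 2 : ℝ) 1, (t - 1) / (1 - 3 * t) ∈ Set.Icc (0 : ℝ) 1) ∧
    ∀ t ∈ Set.Ioo (0 : ℝ) 1,
      1 / (t * (1 - t)) =
        1 / (((t - 1) / (t - 3)) * (1 - (t - 1) / (t - 3))) *
            |deriv (fun s : ℝ => (s - 1) / (s - 3)) t| +
        1 / ((1 / (t + 2)) * (1 - 1 / (t + 2))) *
            |deriv (fun s : ℝ => 1 / (s + 2)) t| +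
        1 / (((t + 1) / (3 * t + 1)) * (1 - (t + 1) / (3 * t + 1))) *
            |deriv (fun s : ℝ => (s + 1) / (3 * s + 1)) t| := by
  refine ⟨?_, ?_, ?_, ?_⟩
  · rintro t ⟨h0, h1⟩
    have hne : (1 : ℝ) - t > 0 := by linarith
    have heq : (3 * t - 1) / (t - 1) = (1 - 3 * t) / (1 - t) := by
      rw [div_eq_div_iff (by linarith) (by linarith)]; ring
    rw [heq, Set.mem_Icc]
    constructor
    · exact div_nonneg (by linarith) (by linarith)
    · rw [div_le_one hne]; linarith
  · rintro t ⟨h0, h1⟩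
    have ht : (0 : ℝ) < t := by linarith
    have h2 : 1 / t ≤ 3 := by rw [div_le_iff₀ ht]; linarith
    have h3 : 2 ≤ 1 / t := by rw [le_div_iff₀ ht]; linarith
    exact ⟨by linarith, by linarith⟩
  · rintro t ⟨h0, h1⟩
    have hne : (3 : ℝ) * t - 1 > 0 := by linarith
    have heq : (t - 1) / (1 - 3 * t) = (1 - t) / (3 * t - 1) := by
      rw [div_eq_div_iff (by linarith) (by linarith)]; ring
    rw [heq, Set.mem_Icc]
    constructor
    · exact div_nonneg (by linarith) (by linarith)
    · rw [div_le_one hne]; linarith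
  · rintro t ⟨h0, h1⟩
    have hn1 : t - 3 ≠ 0 := by intro h; nlinarith [h]
    have hn2 : t + 2 ≠ 0 := by intro h; nlinarith [h]
    have hn3 : 3 * t + 1 ≠ 0 := by intro h; nlinarith [h]
    have d1 : HasDerivAt (fun s : ℝ => (s - 1) / (s - 3)) (-2 / (t - 3) ^ 2) t := by
      have h := ((hasDerivAt_id t).sub_const 1).div ((hasDerivAt_id t).sub_const 3) hn1
      convert h using 1
      iterate 3 rfl
      simp only [id]
      field_simp
      ring
    have d2 : HasDerivAt (fun s : ℝ => 1 / (s + 2)) (-1 / (t + 2) ^ 2) t := by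
      have h := (hasDerivAt_const t (1:ℝ)).div ((hasDerivAt_id t).add_const 2) hn2
      convert h using 1
      iterate 3 rfl
      simp only [id]
      field_simp
      ring
    have d3 : HasDerivAt (fun s : ℝ => (s + 1) / (3 * s + 1)) (-2 / (3 * t + 1) ^ 2) t := by
      have h := ((hasDerivAt_id t).add_const 1).div
        (((hasDerivAt_id t).const_mul 3).add_const 1) hn3
      convert h using 1
      iterate 3 rfl
      simp only [id]
      field_simp
      ring
    rw [d1.deriv, d2.deriv, d3.deriv]
    have sq1 : (0:ℝ) < (t - 3) ^ 2 := by positivity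
    have sq2 : (0:ℝ) < (t + 2) ^ 2 := by positivity
    have sq3 : (0:ℝ) < (3 * t + 1) ^ 2 := by positivity
    have habs1 : |(-2 : ℝ) / (t - 3) ^ 2| = 2 / (t - 3) ^ 2 := by
      rw [abs_div, abs_of_nonneg sq1.le]; norm_num
    have habs2 : |(-1 : ℝ) / (t + 2) ^ 2| = 1 / (t + 2) ^ 2 := by
      rw [abs_div, abs_of_nonneg sq2.le]; norm_num
    have habs3 : |(-2 : ℝ) / (3 * t + 1) ^ 2| = 2 / (3 * t + 1) ^ 2 := by
      rw [abs_div, abs_of_nonneg sq3.le]; norm_num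
    rw [habs1, habs2, habs3]
    have e1 : ((t - 1) / (t - 3)) * (1 - (t - 1) / (t - 3)) = 2 * (1 - t) / (t - 3) ^ 2 := by
      field_simp; ring
    have e2 : (1 / (t + 2)) * (1 - 1 / (t + 2)) = (t + 1) / (t + 2) ^ 2 := by
      field_simp; ring
    have e3 : ((t + 1) / (3 * t + 1)) * (1 - (t + 1) / (3 * t + 1))
        = 2 * t * (t + 1) / (3 * t + 1) ^ 2 := by
      field_simp; ring
    rw [e1, e2, e3]
    have ht0 : t ≠ 0 := ne_of_gt h0
    have h1t : (1:ℝ) - t ≠ 0 := by intro h; linarith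
    have h1p : t + 1 ≠ 0 := by intro h; linarith
    field_simp
    ring
end

section
/- Under stereographic parametrization z(t) = ((2t)/(1+t²), (1−t²)/(1+t²)) of the unit circle and with P = (0, 1/cos(π/n)) a vertex of the circumscribed regular n-gon, the second intersection of the line through P and z(t) with the unit circle is z(s) where s = tan²(π/(2n))/t. Formally: for t ≠ 0 with |t| ≤ tan(π/(2n)), the point z(t*²/t) (t* = tan(π/(2n))) lies on the line through P and z(t). -/
open Real

theorem stereographic_collinearity (n : ℕ) (hn : 3 ≤ n) (t : ℝ) (ht0 : t ≠ 0)
    (ht1 : |t| ≤ tan (π / (2 * n))) :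
    (2 * t / (1 + t ^ 2) - 0) *
        ((1 - (tan (π / (2 * n)) ^ 2 / t) ^ 2) / (1 + (tan (π / (2 * n)) ^ 2 / t) ^ 2)
          - 1 / cos (π / n)) -
      (2 * (tan (π / (2 * n)) ^ 2 / t) / (1 + (tan (π / (2 * n)) ^ 2 / t) ^ 2) - 0) *
        ((1 - t ^ 2) / (1 + t ^ 2) - 1 / cos (π / n)) = 0 := by
  have hn0 : (0:ℝ) < n := by positivity
  have hn3 : (3:ℝ) ≤ n := by exact_mod_cast hn
  set x := π / (2 * n) with hx
  have hx0 : 0 < x := by positivity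
  have hx4 : x < π / 4 := by
    rw [hx, div_lt_div_iff₀ (by positivity) (by norm_num)]
    nlinarith [pi_pos]
  have hx2 : x < π / 2 := by linarith [pi_pos]
  have hcx : 0 < cos x := cos_pos_of_mem_Ioo ⟨by linarith, hx2⟩
  set s := tan x with hs
  have hs0 : 0 < s := tan_pos_of_pos_of_lt_pi_div_two hx0 hx2
  have hs1 : s < 1 := by
    have h := tan_lt_tan_of_nonneg_of_lt_pi_div_two hx0.le (by linarith [pi_pos]) hx4
    rwa [tan_pi_div_four] at h
  -- cos(π/n) = (1 - s^2)/(1 + s^2)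
  have h2x : π / n = 2 * x := by rw [hx]; field_simp
  have htan : s = sin x / cos x := tan_eq_sin_div_cos x
  have hcos2 : cos (π / n) * (1 + s ^ 2) = 1 - s ^ 2 := by
    rw [h2x, cos_two_mul, htan]
    have hsc : sin x ^ 2 = 1 - cos x ^ 2 := by
      have := sin_sq_add_cos_sq x
      linarith
    field_simp
    nlinarith [hsc]
  have hcn : cos (π / n) ≠ 0 := by
    intro h
    rw [h] at hcos2
    nlinarith
  have h1s : (1:ℝ) + s ^ 2 ≠ 0 := by positivity
  have hcval : cos (π / n) = (1 - s ^ 2) / (1 + s ^ 2) := by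
    field_simp
    linarith [hcos2]
  have ht2 : (1:ℝ) + t ^ 2 ≠ 0 := by positivity
  have ht3 : (1:ℝ) + (s ^ 2 / t) ^ 2 ≠ 0 := by positivity
  have hs2 : (1:ℝ) - s ^ 2 ≠ 0 := by nlinarith
  rw [hcval]
  field_simp
  ring
end
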